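/- Let R be a commutative ring and f ∈ R[[t]] a power series with constant coefficient 1. Then there exists a unique function b : ℕ → R (with b indexed by positive integers) such that for every N ≥ 1, the coefficients of f in degrees 0 through N agree with the coefficients of the finite product Π_{i=1}^{N} (1 - b_i t^i) in degrees 0 through N. That is, f has a unique decomposition as the infinite product Π_{i≥1} (1 - b_i t^i). -/

import Mathlib

open PowerSeries

section Aux

variable {R : Type*} [CommRing R]

noncomputable def partialProd (b : ℕ → R) (N : ℕ) : R⟦X⟧ :=
  ∏ i ∈ Finset.Icc 1 N, (1 - C (R := R) (b i) * PowerSeries.X ^ i)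

lemma tail_sub_one_dvd (b : ℕ → R) (m : ℕ) (s : Finset ℕ) :
    (∀ i ∈ s, m ≤ i) →
    (PowerSeries.X : R⟦X⟧) ^ m ∣ (∏ i ∈ s, (1 - C (R := R) (b i) * PowerSeries.X ^ i)) - 1 := by
  classical
  induction s using Finset.induction_on with
  | empty => simp
  | @insert a s ha ih =>
      intro hs
      rw [Finset.prod_insert ha]
      have h1 : (PowerSeries.X : R⟦X⟧) ^ m ∣ (∏ i ∈ s, (1 - C (R := R) (b i) * PowerSeries.X ^ i)) - 1 :=
        ih fun i hi => hs i (Finset.mem_insert_of_mem hi)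
      have h2 : (PowerSeries.X : R⟦X⟧) ^ m ∣ (PowerSeries.X : R⟦X⟧) ^ a :=
        pow_dvd_pow _ (hs a (Finset.mem_insert_self a s))
      have key : (1 - C (R := R) (b a) * PowerSeries.X ^ a) *
            (∏ i ∈ s, (1 - C (R := R) (b i) * PowerSeries.X ^ i)) - 1
          = ((∏ i ∈ s, (1 - C (R := R) (b i) * PowerSeries.X ^ i)) - 1)
            - C (R := R) (b a) * PowerSeries.X ^ a * (∏ i ∈ s, (1 - C (R := R) (b i) * PowerSeries.X ^ i)) := by
        ring
      rw [key]
      exact dvd_sub h1 ((h2.mul_left _).mul_right _)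

lemma coeff_partialProd_stable (b : ℕ → R) {j M N : ℕ} (hjM : j ≤ M) (hMN : M ≤ N) :
    coeff (R := R) j (partialProd b N) = coeff (R := R) j (partialProd b M) := by
  have hsplit : partialProd b N = partialProd b M *
      ∏ i ∈ Finset.Ioc M N, (1 - C (R := R) (b i) * PowerSeries.X ^ i) := by
    rw [partialProd, partialProd, (show Finset.Icc 1 N = Finset.Ioc 0 N by ext x; simp only [Finset.mem_Icc, Finset.mem_Ioc]; omega),
      (show Finset.Icc 1 M = Finset.Ioc 0 M by ext x; simp only [Finset.mem_Icc, Finset.mem_Ioc]; omega),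
      Finset.prod_Ioc_consecutive _ (Nat.zero_le M) hMN]
  have hdvd : (PowerSeries.X : R⟦X⟧) ^ (M + 1) ∣ partialProd b N - partialProd b M := by
    have : partialProd b N - partialProd b M = partialProd b M *
        ((∏ i ∈ Finset.Ioc M N, (1 - C (R := R) (b i) * PowerSeries.X ^ i)) - 1) := by
      rw [hsplit]; ring
    rw [this]
    exact (tail_sub_one_dvd b (M + 1) _ (fun i hi => (Finset.mem_Ioc.mp hi).1)).mul_left _
  have := (PowerSeries.X_pow_dvd_iff.mp hdvd) j (by omega)
  rw [map_sub] at this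
  exact sub_eq_zero.mp this

lemma constantCoeff_partialProd (b : ℕ → R) (N : ℕ) :
    constantCoeff (R := R) (partialProd b N) = 1 := by
  rw [partialProd, map_prod]
  apply Finset.prod_eq_one
  intro i hi
  have hi1 : 1 ≤ i := (Finset.mem_Icc.mp hi).1
  rw [map_sub, map_mul, map_pow, constantCoeff_X, constantCoeff_C, map_one,
    zero_pow (by omega), mul_zero, sub_zero]

lemma coeff_partialProd_succ (b : ℕ → R) (N : ℕ) :
    coeff (R := R) (N + 1) (partialProd b (N + 1)) = coeff (R := R) (N + 1) (partialProd b N) - b (N + 1) := by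
  have h : partialProd b (N + 1) = partialProd b N * (1 - C (R := R) (b (N + 1)) * PowerSeries.X ^ (N + 1)) := by
    rw [partialProd, partialProd, Finset.prod_Icc_succ_top (by omega)]
  rw [h, mul_sub, mul_one, map_sub]
  congr 1
  have : partialProd b N * (C (R := R) (b (N + 1)) * PowerSeries.X ^ (N + 1))
      = (partialProd b N * C (R := R) (b (N + 1))) * PowerSeries.X ^ (N + 1) := by ring
  rw [this]
  have := PowerSeries.coeff_mul_X_pow (partialProd b N * C (R := R) (b (N + 1))) (N + 1) 0
  rw [zero_add] at this
  rw [this]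
  simp [constantCoeff_partialProd]

noncomputable def bSeq (f : R⟦X⟧) : ℕ → R
  | n => (coeff (R := R) n) (∏ i ∈ (Finset.Icc 1 (n - 1)).attach,
      (1 - C (R := R) (bSeq f i.1) * PowerSeries.X ^ (i.1 : ℕ))) - coeff (R := R) n f
  termination_by n => n
  decreasing_by
    have := i.2
    simp only [Finset.mem_Icc] at this
    omega

lemma bSeq_eq (f : R⟦X⟧) (n : ℕ) :
    bSeq f n = coeff (R := R) n (partialProd (bSeq f) (n - 1)) - coeff (R := R) n f := by
  rw [bSeq, partialProd,
    Finset.prod_attach (Finset.Icc 1 (n - 1))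
      (fun i => (1 : R⟦X⟧) - C (R := R) (bSeq f i) * PowerSeries.X ^ i)]

lemma coeff_partialProd_self (f : R⟦X⟧) (n : ℕ) (hn : 1 ≤ n) :
    coeff (R := R) n (partialProd (bSeq f) n) = coeff (R := R) n f := by
  obtain ⟨m, rfl⟩ : ∃ m, n = m + 1 := ⟨n - 1, by omega⟩
  rw [coeff_partialProd_succ, bSeq_eq]
  simp

end Aux

/-- Every power series with constant coefficient `1` has a unique decomposition as an
infinite product `Π_{i ≥ 1} (1 - bᵢ tⁱ)`, in the sense that for every `N ≥ 1` its
coefficients in degrees `0` through `N` agree with those of the finite partial product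
`Π_{i=1}^{N} (1 - bᵢ tⁱ)`, and the `bᵢ` (for `i ≥ 1`) are uniquely determined. -/
theorem exists_unique_product_decomposition (R : Type*) [CommRing R] (f : R⟦X⟧)
    (hf : constantCoeff (R := R) f = 1) :
    ∃ b : ℕ → R,
      (∀ N, 1 ≤ N → ∀ j ≤ N, coeff (R := R) j f =
          coeff (R := R) j (∏ i ∈ Finset.Icc 1 N, (1 - C (R := R) (b i) * PowerSeries.X ^ i))) ∧
      ∀ b' : ℕ → R,
        (∀ N, 1 ≤ N → ∀ j ≤ N, coeff (R := R) j f =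
            coeff (R := R) j (∏ i ∈ Finset.Icc 1 N, (1 - C (R := R) (b' i) * PowerSeries.X ^ i))) →
        ∀ i, 1 ≤ i → b' i = b i := by
  refine ⟨bSeq f, ?_, ?_⟩
  · intro N hN j hj
    show coeff (R := R) j f = coeff (R := R) j (partialProd (bSeq f) N)
    rcases Nat.eq_zero_or_pos j with hj0 | hj1
    · subst hj0
      rw [coeff_zero_eq_constantCoeff_apply, coeff_zero_eq_constantCoeff_apply, hf,
        constantCoeff_partialProd]
    · rw [coeff_partialProd_stable (bSeq f) le_rfl hj, coeff_partialProd_self f j hj1]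
  · intro b' hb' i hi
    induction i using Nat.strong_induction_on with
    | _ i ih =>
      have hprodeq : partialProd b' (i - 1) = partialProd (bSeq f) (i - 1) := by
        unfold partialProd
        apply Finset.prod_congr rfl
        intro k hk
        have hk' := Finset.mem_Icc.mp hk
        rw [ih k (by omega) (by omega)]
      have h1 : coeff (R := R) i f = coeff (R := R) i (partialProd b' i) := hb' i hi i le_rfl
      obtain ⟨m, rfl⟩ : ∃ m, i = m + 1 := ⟨i - 1, by omega⟩
      rw [coeff_partialProd_succ] at h1
      have h2 : coeff (R := R) (m + 1) f
          = coeff (R := R) (m + 1) (partialProd (bSeq f) m) - bSeq f (m + 1) := by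
        rw [← coeff_partialProd_succ, coeff_partialProd_self f (m + 1) (by omega)]
      simp only [Nat.add_sub_cancel] at hprodeq
      rw [hprodeq] at h1
      rw [h1] at h2
      linear_combination -h2
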